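/- Let X be a real D₁ × D₂ matrix and let d₁ ≤ D₁. Then the maximum of ‖UᵀX‖₁ over all real D₁ × d₁ matrices U with orthonormal columns (UᵀU = I_{d₁}) equals the maximum of ‖XB‖₊ over all sign matrices B ∈ {±1}^{D₂ × d₁}, and both maxima are attained. -/

import Mathlib

open Matrix BigOperators

/-- Entrywise L1 norm of a real matrix. -/
noncomputable def l1Norm {m n : ℕ} (M : Matrix (Fin m) (Fin n) ℝ) : ℝ :=
  ∑ i, ∑ j, |M i j|

/-- Nuclear norm of a real matrix: trace of the unique positive semidefinite
square root of the Gram matrix `Aᵀ * A`. -/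
noncomputable def nuclearNorm {D d : ℕ} (A : Matrix (Fin D) (Fin d) ℝ) : ℝ :=
  (let hA : (Aᵀ * A).PosSemidef := by
      simpa using Matrix.posSemidef_conjTranspose_mul_self A
    hA.1.eigenvectorUnitary.1 * diagonal ((√·) ∘ hA.1.eigenvalues) *
      (star hA.1.eigenvectorUnitary : Matrix (Fin d) (Fin d) ℝ)).trace

namespace L1PCA

variable {D d : ℕ}

lemma starV_mul_V {n : ℕ} {M : Matrix (Fin n) (Fin n) ℝ} (hM : M.IsHermitian) :
    (hM.eigenvectorUnitary : Matrix (Fin n) (Fin n) ℝ)ᵀ * hM.eigenvectorUnitary = 1 := by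
  have := (Unitary.mem_iff.mp hM.eigenvectorUnitary.2).1
  simpa [Matrix.star_eq_conjTranspose,
    Matrix.conjTranspose_eq_transpose_of_trivial] using this

lemma V_mul_starV {n : ℕ} {M : Matrix (Fin n) (Fin n) ℝ} (hM : M.IsHermitian) :
    (hM.eigenvectorUnitary : Matrix (Fin n) (Fin n) ℝ) * (hM.eigenvectorUnitary : Matrix (Fin n) (Fin n) ℝ)ᵀ = 1 := by
  have := (Unitary.mem_iff.mp hM.eigenvectorUnitary.2).2
  simpa [Matrix.star_eq_conjTranspose,
    Matrix.conjTranspose_eq_transpose_of_trivial] using this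

lemma spectral_real {n : ℕ} {M : Matrix (Fin n) (Fin n) ℝ} (hM : M.IsHermitian) :
    M = (hM.eigenvectorUnitary : Matrix (Fin n) (Fin n) ℝ) * diagonal hM.eigenvalues
        * (hM.eigenvectorUnitary : Matrix (Fin n) (Fin n) ℝ)ᵀ := by
  have := hM.spectral_theorem
  simpa [Matrix.star_eq_conjTranspose, Matrix.conjTranspose_eq_transpose_of_trivial,
    RCLike.ofReal_real_eq_id] using this

lemma nuclearNorm_eq (A : Matrix (Fin D) (Fin d) ℝ) (hG : (Aᵀ * A).PosSemidef) :
    nuclearNorm A = ∑ i, Real.sqrt (hG.1.eigenvalues i) := by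
  have : nuclearNorm A = ((hG.1.eigenvectorUnitary : Matrix (Fin d) (Fin d) ℝ) *
      diagonal ((√·) ∘ hG.1.eigenvalues) *
      (star hG.1.eigenvectorUnitary : Matrix (Fin d) (Fin d) ℝ)).trace := rfl
  rw [this]
  rw [Matrix.trace_mul_cycle]
  have h1 : (star hG.1.eigenvectorUnitary : Matrix (Fin d) (Fin d) ℝ) *
      (hG.1.eigenvectorUnitary : Matrix (Fin d) (Fin d) ℝ) = 1 := by
    simpa [Matrix.star_eq_conjTranspose, Matrix.conjTranspose_eq_transpose_of_trivial]
      using starV_mul_V hG.1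
  rw [h1, one_mul]
  simp [Matrix.trace_diagonal, RCLike.ofReal_real_eq_id]

lemma gram_col (A : Matrix (Fin D) (Fin d) ℝ) (hG : (Aᵀ * A).PosSemidef) :
    (A * (hG.1.eigenvectorUnitary : Matrix (Fin d) (Fin d) ℝ))ᵀ * (A * (hG.1.eigenvectorUnitary : Matrix (Fin d) (Fin d) ℝ))
      = diagonal hG.1.eigenvalues := by
  rw [transpose_mul]
  calc (hG.1.eigenvectorUnitary : Matrix (Fin d) (Fin d) ℝ)ᵀ * Aᵀ * (A * (hG.1.eigenvectorUnitary : Matrix (Fin d) (Fin d) ℝ))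
      = (hG.1.eigenvectorUnitary : Matrix (Fin d) (Fin d) ℝ)ᵀ * (Aᵀ * A) * (hG.1.eigenvectorUnitary : Matrix (Fin d) (Fin d) ℝ) := by
        simp only [Matrix.mul_assoc]
    _ = (hG.1.eigenvectorUnitary : Matrix (Fin d) (Fin d) ℝ)ᵀ *
          ((hG.1.eigenvectorUnitary : Matrix (Fin d) (Fin d) ℝ) * diagonal hG.1.eigenvalues
            * (hG.1.eigenvectorUnitary : Matrix (Fin d) (Fin d) ℝ)ᵀ)
          * (hG.1.eigenvectorUnitary : Matrix (Fin d) (Fin d) ℝ) := by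
        rw [← spectral_real hG.1]
    _ = diagonal hG.1.eigenvalues := by
        rw [show ∀ (V Dg : Matrix (Fin d) (Fin d) ℝ), Vᵀ * (V * Dg * Vᵀ) * V
            = (Vᵀ * V) * Dg * (Vᵀ * V) from fun V Dg => by
              simp only [Matrix.mul_assoc], starV_mul_V hG.1, one_mul, mul_one]

lemma trace_le (A : Matrix (Fin D) (Fin d) ℝ) (hG : (Aᵀ * A).PosSemidef)
    (U : Matrix (Fin D) (Fin d) ℝ) (hU : Uᵀ * U = 1) :
    (Uᵀ * A).trace ≤ ∑ i, Real.sqrt (hG.1.eigenvalues i) := by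
  classical
  set V : Matrix (Fin d) (Fin d) ℝ := (hG.1.eigenvectorUnitary : Matrix (Fin d) (Fin d) ℝ) with hV
  have h1 : Vᵀ * V = 1 := starV_mul_V hG.1
  have h2 : V * Vᵀ = 1 := V_mul_starV hG.1
  have hAV : (A * V)ᵀ * (A * V) = diagonal hG.1.eigenvalues := gram_col A hG
  have key : (Uᵀ * A).trace = ((U * V)ᵀ * (A * V)).trace := by
    rw [transpose_mul,
      show Vᵀ * Uᵀ * (A * V) = Vᵀ * (Uᵀ * A) * V by simp only [Matrix.mul_assoc],
      Matrix.trace_mul_cycle, h2, one_mul]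
  have hUV : (U * V)ᵀ * (U * V) = 1 := by
    rw [transpose_mul,
      show Vᵀ * Uᵀ * (U * V) = Vᵀ * (Uᵀ * U) * V by simp only [Matrix.mul_assoc],
      hU, Matrix.mul_one, h1]
  have tr_eq : ((U * V)ᵀ * (A * V)).trace = ∑ j, ∑ i, (U * V) i j * (A * V) i j := by
    simp [Matrix.trace, Matrix.diag, Matrix.mul_apply, mul_comm]
  rw [key, tr_eq]
  refine Finset.sum_le_sum fun j _ => ?_
  have h3 : ∑ i, (U * V) i j ^ 2 = 1 := by
    have : ((U * V)ᵀ * (U * V)) j j = (1 : Matrix (Fin d) (Fin d) ℝ) j j := by rw [hUV]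
    simpa [Matrix.mul_apply, Matrix.one_apply, pow_two, mul_comm] using this
  have h4 : ∑ i, (A * V) i j ^ 2 = hG.1.eigenvalues j := by
    have : ((A * V)ᵀ * (A * V)) j j = diagonal hG.1.eigenvalues j j := by rw [hAV]
    simpa [Matrix.mul_apply, pow_two, mul_comm] using this
  calc ∑ i, (U * V) i j * (A * V) i j
      ≤ Real.sqrt (∑ i, (U * V) i j ^ 2) * Real.sqrt (∑ i, (A * V) i j ^ 2) :=
        Real.sum_mul_le_sqrt_mul_sqrt _ _ _
    _ = Real.sqrt (hG.1.eigenvalues j) := by rw [h3, h4, Real.sqrt_one, one_mul]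


lemma exists_trace_eq (hd : d ≤ D) (A : Matrix (Fin D) (Fin d) ℝ)
    (hG : (Aᵀ * A).PosSemidef) :
    ∃ U : Matrix (Fin D) (Fin d) ℝ, Uᵀ * U = 1 ∧
      (Uᵀ * A).trace = ∑ i, Real.sqrt (hG.1.eigenvalues i) := by
  classical
  set μ : Fin d → ℝ := hG.1.eigenvalues with hμdef
  set V : Matrix (Fin d) (Fin d) ℝ := (hG.1.eigenvectorUnitary : Matrix (Fin d) (Fin d) ℝ) with hV
  have h1 : Vᵀ * V = 1 := starV_mul_V hG.1
  have h2 : V * Vᵀ = 1 := V_mul_starV hG.1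
  have hμ0 : ∀ j, 0 ≤ μ j := fun j => hG.eigenvalues_nonneg j
  have hAV : (A * V)ᵀ * (A * V) = diagonal μ := gram_col A hG
  have hcol : ∀ j k, ∑ i, (A * V) i j * (A * V) i k = diagonal μ j k := by
    intro j k
    have : ((A * V)ᵀ * (A * V)) j k = diagonal μ j k := by rw [hAV]
    simpa [Matrix.mul_apply, mul_comm] using this
  -- columns of A*V as Euclidean vectors
  let c : Fin d → EuclideanSpace ℝ (Fin D) := fun j => WithLp.toLp 2 (fun i => (A * V) i j)
  have hinner : ∀ j k, (inner ℝ (c j) (c k) : ℝ) = diagonal μ j k := by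
    intro j k
    simpa [PiLp.inner_apply, RCLike.inner_apply, c, mul_comm] using hcol j k
  -- zero columns
  have hczero : ∀ j, μ j = 0 → c j = 0 := by
    intro j hj
    have h := hinner j j
    rw [Matrix.diagonal_apply_eq, hj] at h
    have : (c j : EuclideanSpace ℝ (Fin D)) = 0 := by
      have := inner_self_eq_zero (𝕜 := ℝ) (x := c j)
      exact this.mp h
    exact this
  -- candidate partial family
  let v : Fin D → EuclideanSpace ℝ (Fin D) := fun i =>
    if h : (i : ℕ) < d then (Real.sqrt (μ ⟨i, h⟩))⁻¹ • c ⟨i, h⟩ else 0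
  let s : Set (Fin D) := {i | ∃ h : (i : ℕ) < d, μ ⟨i, h⟩ ≠ 0}
  have horth : Orthonormal ℝ (s.restrict v) := by
    rw [orthonormal_iff_ite]
    rintro ⟨i, hi, hiμ⟩ ⟨j, hj, hjμ⟩
    have hvi : s.restrict v ⟨i, hi, hiμ⟩ = (Real.sqrt (μ ⟨i, hi⟩))⁻¹ • c ⟨i, hi⟩ := by
      simp [v, Set.restrict, hi]
    have hvj : s.restrict v ⟨j, hj, hjμ⟩ = (Real.sqrt (μ ⟨j, hj⟩))⁻¹ • c ⟨j, hj⟩ := by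
      simp [v, Set.restrict, hj]
    rw [hvi, hvj, real_inner_smul_left, real_inner_smul_right, hinner]
    by_cases hij : i = j
    · subst hij
      have hs : Real.sqrt (μ ⟨i, hi⟩) ≠ 0 := by
        rw [Real.sqrt_ne_zero (hμ0 _)]
        exact hiμ
      have hsq : Real.sqrt (μ ⟨i, hi⟩) * Real.sqrt (μ ⟨i, hi⟩) = μ ⟨i, hi⟩ :=
        Real.mul_self_sqrt (hμ0 _)
      rw [if_pos rfl, Matrix.diagonal_apply_eq]
      field_simp
      rw [Real.sq_sqrt (hμ0 _)]
    · have hne : (⟨i, hi⟩ : Fin d) ≠ ⟨j, hj⟩ := by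
        intro h
        have hval : (i : ℕ) = (j : ℕ) := by
          have := congrArg Fin.val h
          simpa using this
        exact hij (Fin.ext hval)
      rw [Matrix.diagonal_apply_ne _ hne, mul_zero, mul_zero,
        if_neg (fun h => hij (Subtype.ext_iff.mp h))]
  obtain ⟨b, hb⟩ := horth.exists_orthonormalBasis_extension_of_card_eq
    (by simp [finrank_euclideanSpace])
  -- the matrix W
  let W : Matrix (Fin D) (Fin d) ℝ := Matrix.of fun i j => b (Fin.castLE hd j) i
  have hWW : Wᵀ * W = 1 := by
    ext j k
    have hbo := orthonormal_iff_ite.mp b.orthonormal (Fin.castLE hd j) (Fin.castLE hd k)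
    have hin : (inner ℝ (b (Fin.castLE hd j)) (b (Fin.castLE hd k)) : ℝ)
        = ∑ i, b (Fin.castLE hd j) i * b (Fin.castLE hd k) i := by
      simp [PiLp.inner_apply, RCLike.inner_apply, mul_comm]
    rw [hin] at hbo
    have : (Wᵀ * W) j k = ∑ i, b (Fin.castLE hd j) i * b (Fin.castLE hd k) i := by
      simp [Matrix.mul_apply, W]
    rw [this, hbo]
    by_cases hjk : j = k
    · subst hjk; simp
    · rw [if_neg (fun h => hjk (Fin.castLE_injective hd h)), Matrix.one_apply_ne hjk]
  refine ⟨W * Vᵀ, ?_, ?_⟩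
  · rw [transpose_mul, transpose_transpose,
      show V * Wᵀ * (W * Vᵀ) = V * (Wᵀ * W) * Vᵀ by simp only [Matrix.mul_assoc],
      hWW, Matrix.mul_one, h2]
  · rw [transpose_mul, transpose_transpose,
      show (V * Wᵀ * A).trace = (Wᵀ * (A * V)).trace by
        rw [Matrix.trace_mul_cycle, ← Matrix.mul_assoc, Matrix.trace_mul_comm,
          Matrix.mul_assoc]]
    have tr_eq : (Wᵀ * (A * V)).trace = ∑ j, ∑ i, W i j * (A * V) i j := by
      simp [Matrix.trace, Matrix.diag, Matrix.mul_apply, mul_comm]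
    rw [tr_eq]
    refine Finset.sum_congr rfl fun j _ => ?_
    by_cases hj : μ j = 0
    · have hc0 := hczero j hj
      have : ∀ i, (A * V) i j = 0 := by
        intro i
        have : c j i = 0 := by rw [hc0]; rfl
        simpa [c] using this
      simp [this, hj]
    · -- b (castLE j) = (√ μ j)⁻¹ • c j
      have hmem : (Fin.castLE hd j) ∈ s := by
        refine ⟨j.2, ?_⟩
        have : (⟨((Fin.castLE hd j) : ℕ), j.2⟩ : Fin d) = j := by ext; rfl
        rw [this]; exact hj
      have hbj : b (Fin.castLE hd j) = (Real.sqrt (μ j))⁻¹ • c j := by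
        rw [hb _ hmem]
        have hlt : ((Fin.castLE hd j : Fin D) : ℕ) < d := j.2
        have : (⟨((Fin.castLE hd j) : ℕ), hlt⟩ : Fin d) = j := by ext; rfl
        simp only [v, dif_pos hlt, this]
      have hcs : ∑ i, c j i * c j i = μ j := by
        have := hcol j j; rw [Matrix.diagonal_apply_eq] at this; exact this
      have hWcol : ∀ i, W i j = (Real.sqrt (μ j))⁻¹ * c j i := by
        intro i
        show b (Fin.castLE hd j) i = _
        rw [hbj]; rfl
      calc ∑ i, W i j * (A * V) i j
          = (Real.sqrt (μ j))⁻¹ * ∑ i, c j i * c j i := by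
            rw [Finset.mul_sum]
            exact Finset.sum_congr rfl fun i _ => by rw [hWcol i]; change _ = _ * ((A * V) i j * (A * V) i j); ring
        _ = (Real.sqrt (μ j))⁻¹ * μ j := by rw [hcs]
        _ = Real.sqrt (μ j) := by
            have hs : Real.sqrt (μ j) ≠ 0 := by
              rw [Real.sqrt_ne_zero (hμ0 _)]; exact hj
            have hsq : Real.sqrt (μ j) * Real.sqrt (μ j) = μ j :=
              Real.mul_self_sqrt (hμ0 _)
            field_simp
            rw [Real.sq_sqrt (hμ0 _)]

lemma trace_le' (A U : Matrix (Fin D) (Fin d) ℝ) (hU : Uᵀ * U = 1) :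
    (Uᵀ * A).trace ≤ nuclearNorm A := by
  have hG : (Aᵀ * A).PosSemidef := by
    simpa using Matrix.posSemidef_conjTranspose_mul_self A
  rw [nuclearNorm_eq A hG]
  exact trace_le A hG U hU

lemma exists_trace_eq' (hd : d ≤ D) (A : Matrix (Fin D) (Fin d) ℝ) :
    ∃ U : Matrix (Fin D) (Fin d) ℝ, Uᵀ * U = 1 ∧ (Uᵀ * A).trace = nuclearNorm A := by
  have hG : (Aᵀ * A).PosSemidef := by
    simpa using Matrix.posSemidef_conjTranspose_mul_self A
  obtain ⟨U, hU, htr⟩ := exists_trace_eq hd A hG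
  exact ⟨U, hU, by rw [htr, nuclearNorm_eq A hG]⟩

lemma pairing_le_l1 {D₁ D₂ d₁ : ℕ} (U : Matrix (Fin D₁) (Fin d₁) ℝ)
    (X : Matrix (Fin D₁) (Fin D₂) ℝ) (B : Matrix (Fin D₂) (Fin d₁) ℝ)
    (hB : ∀ i j, B i j = 1 ∨ B i j = -1) :
    (Uᵀ * (X * B)).trace ≤ l1Norm (Uᵀ * X) := by
  rw [← Matrix.mul_assoc]
  have tr_eq : ((Uᵀ * X) * B).trace = ∑ j, ∑ k, (Uᵀ * X) j k * B k j := by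
    simp [Matrix.trace, Matrix.diag, Matrix.mul_apply]
  rw [tr_eq, l1Norm]
  refine Finset.sum_le_sum fun j _ => Finset.sum_le_sum fun k _ => ?_
  have hBabs : |B k j| = 1 := by rcases hB k j with h | h <;> simp [h]
  calc (Uᵀ * X) j k * B k j ≤ |(Uᵀ * X) j k * B k j| := le_abs_self _
    _ = |(Uᵀ * X) j k| := by rw [abs_mul, hBabs, mul_one]

lemma exists_sign_pairing {D₁ D₂ d₁ : ℕ} (U : Matrix (Fin D₁) (Fin d₁) ℝ)
    (X : Matrix (Fin D₁) (Fin D₂) ℝ) :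
    ∃ B : Matrix (Fin D₂) (Fin d₁) ℝ, (∀ i j, B i j = 1 ∨ B i j = -1) ∧
      (Uᵀ * (X * B)).trace = l1Norm (Uᵀ * X) := by
  classical
  refine ⟨Matrix.of fun k j => if 0 ≤ (Uᵀ * X) j k then 1 else -1,
    fun i j => by dsimp only [Matrix.of_apply]; split <;> simp, ?_⟩
  rw [← Matrix.mul_assoc]
  have tr_eq : ((Uᵀ * X) * Matrix.of fun k j => if 0 ≤ (Uᵀ * X) j k then (1:ℝ) else -1).trace
      = ∑ j, ∑ k, (Uᵀ * X) j k * (if 0 ≤ (Uᵀ * X) j k then (1:ℝ) else -1) := by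
    simp [Matrix.trace, Matrix.diag, Matrix.mul_apply]
  rw [tr_eq, l1Norm]
  refine Finset.sum_congr rfl fun j _ => Finset.sum_congr rfl fun k _ => ?_
  by_cases h : 0 ≤ (Uᵀ * X) j k
  · rw [if_pos h, mul_one, abs_of_nonneg h]
  · rw [if_neg h, abs_of_neg (not_le.mp h)]; ring

end L1PCA

theorem l1pca_eq_nucnorm_max
    {D₁ D₂ d₁ : ℕ} (hd : d₁ ≤ D₁) (X : Matrix (Fin D₁) (Fin D₂) ℝ) :
    ∃ x : ℝ,
      IsGreatest {v : ℝ | ∃ U : Matrix (Fin D₁) (Fin d₁) ℝ,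
          Uᵀ * U = 1 ∧ v = l1Norm (Uᵀ * X)} x ∧
      IsGreatest {v : ℝ | ∃ B : Matrix (Fin D₂) (Fin d₁) ℝ,
          (∀ i j, B i j = 1 ∨ B i j = -1) ∧ v = nuclearNorm (X * B)} x := by
  classical
  obtain ⟨f₀, -, hf₀⟩ := Finset.exists_max_image
    (Finset.univ : Finset (Fin D₂ → Fin d₁ → Bool))
    (fun f => nuclearNorm (X * Matrix.of fun i j => if f i j then (1:ℝ) else -1))
    ⟨fun _ _ => true, Finset.mem_univ _⟩
  set B₀ : Matrix (Fin D₂) (Fin d₁) ℝ :=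
    Matrix.of fun i j => if f₀ i j then (1:ℝ) else -1 with hB₀def
  have hB₀sign : ∀ i j, B₀ i j = 1 ∨ B₀ i j = -1 := fun i j => by
    dsimp only [B₀, Matrix.of_apply]; split <;> simp
  set x := nuclearNorm (X * B₀) with hx
  have hmax : ∀ B : Matrix (Fin D₂) (Fin d₁) ℝ, (∀ i j, B i j = 1 ∨ B i j = -1) →
      nuclearNorm (X * B) ≤ x := by
    intro B hB
    have hBeq : (Matrix.of fun i j => if (fun i j => decide (B i j = 1)) i j then (1:ℝ) else -1) = B := by
      ext i j
      rcases hB i j with h | h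
      · simp [h]
      · simp only [Matrix.of_apply, h]
        norm_num
    have := hf₀ (fun i j => decide (B i j = 1)) (Finset.mem_univ _)
    rw [hBeq] at this
    exact this
  -- upper bound for the U-side
  have hub : ∀ U : Matrix (Fin D₁) (Fin d₁) ℝ, Uᵀ * U = 1 → l1Norm (Uᵀ * X) ≤ x := by
    intro U hU
    obtain ⟨B, hB, hEq⟩ := L1PCA.exists_sign_pairing U X
    calc l1Norm (Uᵀ * X) = (Uᵀ * (X * B)).trace := hEq.symm
      _ ≤ nuclearNorm (X * B) := L1PCA.trace_le' (X * B) U hU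
      _ ≤ x := hmax B hB
  obtain ⟨U₀, hU₀, htr₀⟩ := L1PCA.exists_trace_eq' hd (X * B₀)
  have hxle : x ≤ l1Norm (U₀ᵀ * X) := by
    rw [hx, ← htr₀]
    exact L1PCA.pairing_le_l1 U₀ X B₀ hB₀sign
  refine ⟨x, ⟨⟨U₀, hU₀, (le_antisymm (hub U₀ hU₀) hxle).symm⟩, ?_⟩,
    ⟨⟨B₀, hB₀sign, rfl⟩, ?_⟩⟩
  · rintro v ⟨U, hU, rfl⟩
    exact hub U hU
  · rintro v ⟨B, hB, rfl⟩
    exact hmax B hB
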